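/- Let q, p satisfy the Bessel-kernel coupled system xq' = xp + (-a + [u-w])q, xp' = -xq + (a - [u-w])p with u' = 2q², w' = 2p², and boundary behavior q(x) ~ (x/2)^{a+1}/Γ(a+3/2), p(x) ~ (x/2)^a/Γ(a+1/2) as x → 0⁺. Then 2qp = w - u identically. -/

import Mathlib

open Filter

/-- For the Bessel-kernel Tracy–Widom system, the integral `2qp = w - u` holds. -/
theorem stmt16 (a : ℝ) (ha : -1 / 2 < a) (x₁ : ℝ) (hx₁ : 0 < x₁)
    (q p u w : ℝ → ℝ)
    (hu : ∀ x ∈ Set.Ioo (0 : ℝ) x₁, HasDerivAt u (2 * (q x) ^ 2) x)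
    (hw : ∀ x ∈ Set.Ioo (0 : ℝ) x₁, HasDerivAt w (2 * (p x) ^ 2) x)
    (hq : ∀ x ∈ Set.Ioo (0 : ℝ) x₁, HasDerivAt q
      ((x * p x + (-a + (u x - w x)) * q x) / x) x)
    (hp : ∀ x ∈ Set.Ioo (0 : ℝ) x₁, HasDerivAt p
      ((-(x * q x) + (a - (u x - w x)) * p x) / x) x)
    (hu0 : Tendsto u (nhdsWithin 0 (Set.Ioo 0 x₁)) (nhds 0))
    (hw0 : Tendsto w (nhdsWithin 0 (Set.Ioo 0 x₁)) (nhds 0))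
    (hqbc : Tendsto (fun x => q x / ((x / 2) ^ (a + 1) / Real.Gamma (a + 3 / 2)))
      (nhdsWithin 0 (Set.Ioo 0 x₁)) (nhds 1))
    (hpbc : Tendsto (fun x => p x / ((x / 2) ^ a / Real.Gamma (a + 1 / 2)))
      (nhdsWithin 0 (Set.Ioo 0 x₁)) (nhds 1)) :
    ∀ x ∈ Set.Ioo (0 : ℝ) x₁, 2 * (q x * p x) = w x - u x := by
  set f : ℝ → ℝ := fun x => 2 * (q x * p x) - (w x - u x) with hfdef
  have hderiv : ∀ x ∈ Set.Ioo (0 : ℝ) x₁, HasDerivAt f 0 x := by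
    intro x hx
    have hx0 : x ≠ 0 := ne_of_gt hx.1
    have h1 := (((hq x hx).mul (hp x hx)).const_mul (2:ℝ)).sub
      ((hw x hx).sub (hu x hx))
    replace h1 : HasDerivAt f _ x := h1
    convert h1 using 1
    field_simp
    ring
  -- f is constant on the convex set Ioo 0 x₁
  have hconst : ∀ x ∈ Set.Ioo (0 : ℝ) x₁, ∀ y ∈ Set.Ioo (0 : ℝ) x₁, f x = f y := by
    intro x hx y hy
    apply (convex_Ioo (0:ℝ) x₁).is_const_of_fderivWithin_eq_zero
      (fun z hz => ((hderiv z hz).differentiableAt).differentiableWithinAt)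
      ?_ hx hy
    intro z hz
    rw [fderivWithin_of_isOpen isOpen_Ioo hz, (hderiv z hz).hasFDerivAt.fderiv]
    ext
    simp
  -- positivity facts
  have hΓ1 : 0 < Real.Gamma (a + 3 / 2) := Real.Gamma_pos_of_pos (by linarith)
  have hΓ2 : 0 < Real.Gamma (a + 1 / 2) := Real.Gamma_pos_of_pos (by linarith)
  -- the product of the boundary comparison functions tends to 0
  have hgh : Tendsto (fun x : ℝ => ((x / 2) ^ (a + 1) / Real.Gamma (a + 3 / 2)) *
      ((x / 2) ^ a / Real.Gamma (a + 1 / 2)))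
      (nhdsWithin 0 (Set.Ioo 0 x₁)) (nhds 0) := by
    have h2a : (0:ℝ) < 2 * a + 1 := by linarith
    have hcont : Tendsto (fun x : ℝ => (x / 2) ^ (2 * a + 1))
        (nhdsWithin 0 (Set.Ioo 0 x₁)) (nhds 0) := by
      have h1 : Tendsto (fun x : ℝ => x / 2) (nhdsWithin 0 (Set.Ioo 0 x₁)) (nhds 0) := by
        simpa using ((continuous_id.div_const (2:ℝ)).tendsto 0).mono_left
          (nhdsWithin_le_nhds (s := Set.Ioo (0:ℝ) x₁))
      have h2 : Tendsto (fun t : ℝ => t ^ (2 * a + 1)) (nhds 0) (nhds 0) := by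
        have := (Real.continuousAt_rpow_const 0 (2 * a + 1) (Or.inr h2a.le)).tendsto
        rwa [Real.zero_rpow (ne_of_gt h2a)] at this
      exact h2.comp h1
    have heq : ∀ x ∈ Set.Ioo (0:ℝ) x₁,
        ((x / 2) ^ (a + 1) / Real.Gamma (a + 3 / 2)) *
        ((x / 2) ^ a / Real.Gamma (a + 1 / 2)) =
        (x / 2) ^ (2 * a + 1) / (Real.Gamma (a + 3 / 2) * Real.Gamma (a + 1 / 2)) := by
      intro x hx
      have hx2 : (0:ℝ) < x / 2 := by linarith [hx.1]
      rw [div_mul_div_comm, ← Real.rpow_add hx2]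
      ring_nf
    have := (hcont.div_const (Real.Gamma (a + 3 / 2) * Real.Gamma (a + 1 / 2)))
    rw [zero_div] at this
    exact this.congr' (by
      filter_upwards [self_mem_nhdsWithin] with x hx
      exact (heq x hx).symm)
  -- q * p tends to 0
  have hqp : Tendsto (fun x => q x * p x) (nhdsWithin 0 (Set.Ioo 0 x₁)) (nhds 0) := by
    have := (hqbc.mul hpbc).mul hgh
    rw [mul_zero] at this
    refine this.congr' ?_
    filter_upwards [self_mem_nhdsWithin] with x hx
    have hx2 : (0:ℝ) < x / 2 := by linarith [hx.1]
    have hg : (x / 2) ^ (a + 1) / Real.Gamma (a + 3 / 2) ≠ 0 := by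
      positivity
    have hh : (x / 2) ^ a / Real.Gamma (a + 1 / 2) ≠ 0 := by
      positivity
    rw [show ∀ A B C D : ℝ, A / C * (B / D) * (C * D) = A / C * C * (B / D * D) from
      fun A B C D => by ring, div_mul_cancel₀ _ hg, div_mul_cancel₀ _ hh]
  -- f tends to 0
  have hf0 : Tendsto f (nhdsWithin 0 (Set.Ioo 0 x₁)) (nhds 0) := by
    have := (hqp.const_mul (2:ℝ)).sub (hw0.sub hu0)
    simpa using this
  -- nhdsWithin is NeBot
  haveI hne : (nhdsWithin (0:ℝ) (Set.Ioo 0 x₁)).NeBot := by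
    apply mem_closure_iff_nhdsWithin_neBot.mp
    rw [closure_Ioo (ne_of_lt hx₁)]
    exact ⟨le_refl 0, hx₁.le⟩
  intro x hx
  have hfx : Tendsto f (nhdsWithin 0 (Set.Ioo 0 x₁)) (nhds (f x)) := by
    refine tendsto_const_nhds.congr' ?_
    filter_upwards [self_mem_nhdsWithin] with y hy
    exact hconst x hx y hy
  have : f x = 0 := tendsto_nhds_unique hfx hf0
  have := this
  simp only [hfdef] at this
  linarith
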